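/- For p, q in the probability simplex Δₙ with positive coordinates, the log-barrier Bregman divergence satisfies Breg_F(q‖p) = Σᵢ (qᵢ/pᵢ - 1 - log(qᵢ/pᵢ)) ≥ (1/2) Σᵢ (pᵢ - qᵢ)²/pᵢ. -/

import Mathlib

open Real Set

private lemma logbar_hasDerivA (x : ℝ) (hx : 0 < x) :
    HasDerivAt (fun y : ℝ => y / 2 - Real.log y - 1 / (2 * y))
      ((x - 1) ^ 2 / (2 * x ^ 2)) x := by
  have h1 : HasDerivAt (fun y : ℝ => y / 2) (1 / 2) x := (hasDerivAt_id x).div_const 2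
  have h2 : HasDerivAt Real.log x⁻¹ x := Real.hasDerivAt_log hx.ne'
  have h0 : HasDerivAt (fun y : ℝ => 2 * y) 2 x := by
    simpa using (hasDerivAt_id x).const_mul (2 : ℝ)
  have h3 : HasDerivAt (fun y : ℝ => 1 / (2 * y))
      ((0 * (2 * x) - 1 * 2) / (2 * x) ^ 2) x :=
    (hasDerivAt_const x 1).div h0 (by positivity)
  have := (h1.sub h2).sub h3
  refine this.congr_deriv ?_
  field_simp
  ring

private lemma logbar_hasDerivB (x : ℝ) (hx : 0 < x) :
    HasDerivAt (fun y : ℝ => y - 1 - Real.log y - (y - 1) ^ 2 / 2)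
      (-((x - 1) ^ 2 / x)) x := by
  have h1 : HasDerivAt (fun y : ℝ => y - 1) 1 x := (hasDerivAt_id x).sub_const 1
  have h2 : HasDerivAt Real.log x⁻¹ x := Real.hasDerivAt_log hx.ne'
  have h3 : HasDerivAt (fun y : ℝ => (y - 1) ^ 2 / 2)
      ((2 * (x - 1) ^ (2 - 1) * 1) / 2) x := (((hasDerivAt_id x).sub_const 1).pow 2).div_const 2
  have := (h1.sub h2).sub h3
  refine this.congr_deriv ?_
  field_simp
  ring

private lemma logbar_ge_one (t : ℝ) (ht : 1 ≤ t) :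
    t - 1 - Real.log t ≥ (t - 1) ^ 2 / (2 * t) := by
  have ht0 : (0 : ℝ) < t := lt_of_lt_of_le one_pos ht
  set f : ℝ → ℝ := fun y => y / 2 - Real.log y - 1 / (2 * y) with hf
  have hmono : MonotoneOn f (Ici (1 : ℝ)) := by
    apply monotoneOn_of_hasDerivWithinAt_nonneg (f' := fun x => (x - 1) ^ 2 / (2 * x ^ 2))
      (convex_Ici 1)
    · intro x hx
      exact (logbar_hasDerivA x (lt_of_lt_of_le one_pos hx)).continuousAt.continuousWithinAt
    · intro x hx
      rw [interior_Ici] at hx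
      exact (logbar_hasDerivA x (lt_trans one_pos hx)).hasDerivWithinAt
    · intro x hx
      rw [interior_Ici] at hx
      have : (0 : ℝ) < x := lt_trans one_pos hx
      positivity
  have h1 : f 1 ≤ f t := hmono (mem_Ici.2 le_rfl) (mem_Ici.2 ht) ht
  have hf1 : f 1 = 0 := by simp [hf]
  have hft : f t = t / 2 - Real.log t - 1 / (2 * t) := rfl
  have key : (t - 1) ^ 2 / (2 * t) = t / 2 - 1 + 1 / (2 * t) := by
    field_simp; ring
  rw [hf1] at h1
  rw [hft] at h1
  linarith [h1]

private lemma logbar_le_one (t : ℝ) (ht0 : 0 < t) (ht : t ≤ 1) :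
    t - 1 - Real.log t ≥ (t - 1) ^ 2 / 2 := by
  set g : ℝ → ℝ := fun y => y - 1 - Real.log y - (y - 1) ^ 2 / 2 with hg
  have hanti : AntitoneOn g (Ioi (0 : ℝ)) := by
    apply antitoneOn_of_hasDerivWithinAt_nonpos (f' := fun x => -((x - 1) ^ 2 / x))
      (convex_Ioi 0)
    · intro x hx
      exact (logbar_hasDerivB x hx).continuousAt.continuousWithinAt
    · intro x hx
      rw [interior_Ioi] at hx
      exact (logbar_hasDerivB x hx).hasDerivWithinAt
    · intro x hx
      rw [interior_Ioi] at hx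
      have hx' : (0 : ℝ) < x := hx
      have : (0 : ℝ) ≤ (x - 1) ^ 2 / x := by positivity
      linarith
  have h1 : g 1 ≤ g t := hanti (mem_Ioi.2 ht0) (mem_Ioi.2 one_pos) ht
  have hg1 : g 1 = 0 := by simp [hg]
  rw [hg1] at h1
  have : t - 1 - Real.log t - (t - 1) ^ 2 / 2 ≥ 0 := h1
  linarith

private lemma logbar_pointwise (a b : ℝ) (ha : 0 < a) (hb : 0 < b)
    (ha1 : a ≤ 1) (hb1 : b ≤ 1) :
    b / a - 1 - Real.log (b / a) ≥ (a - b) ^ 2 / (2 * a) := by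
  set t := b / a with htdef
  have ht0 : 0 < t := div_pos hb ha
  have hab : (a - b) ^ 2 / (2 * a) = a * (t - 1) ^ 2 / 2 := by
    rw [htdef]; field_simp; ring
  rw [hab]
  rcases le_or_gt t 1 with h | h
  · have := logbar_le_one t ht0 h
    have h2 : a * (t - 1) ^ 2 / 2 ≤ (t - 1) ^ 2 / 2 := by nlinarith [sq_nonneg (t - 1)]
    linarith
  · have := logbar_ge_one t h.le
    have hat : a * t = b := by rw [htdef]; field_simp
    have h2 : a * (t - 1) ^ 2 / 2 ≤ (t - 1) ^ 2 / (2 * t) := by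
      rw [div_le_div_iff₀ (by norm_num) (by positivity)]
      nlinarith [sq_nonneg (t - 1), hb1, ht0]
    linarith

theorem log_barrier_bregman_simplex_lower_bound (n : ℕ) (hn : 1 ≤ n)
    (p q : Fin n → ℝ) (hp : ∀ i, 0 < p i) (hq : ∀ i, 0 < q i)
    (hpsum : ∑ i, p i = 1) (hqsum : ∑ i, q i = 1) :
    (∑ i, (q i / p i - 1 - Real.log (q i / p i))) ≥
      (1 / 2) * ∑ i, (p i - q i) ^ 2 / p i := by
  have hp1 : ∀ i, p i ≤ 1 := by
    intro i
    calc p i ≤ ∑ j, p j := Finset.single_le_sum (fun j _ => (hp j).le) (Finset.mem_univ i)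
    _ = 1 := hpsum
  have hq1 : ∀ i, q i ≤ 1 := by
    intro i
    calc q i ≤ ∑ j, q j := Finset.single_le_sum (fun j _ => (hq j).le) (Finset.mem_univ i)
    _ = 1 := hqsum
  have hrw : (1 / 2 : ℝ) * ∑ i, (p i - q i) ^ 2 / p i = ∑ i, (p i - q i) ^ 2 / (2 * p i) := by
    rw [Finset.mul_sum]
    congr 1
    ext i
    have := (hp i).ne'
    field_simp
  rw [hrw]
  apply Finset.sum_le_sum
  intro i _
  exact logbar_pointwise (p i) (q i) (hp i) (hq i) (hp1 i) (hq1 i)
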